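/- If i⪰j in Isbell's desirability relation for a simple game v, then SSI_i(v) ≥ SSI_j(v) and η_i(v) ≥ η_j(v). Consequently, for a complete simple game with 1⪰2⪰...⪰n, the Shapley-Shubik and Banzhaf power vectors are non-increasing. -/
import Mathlib


open Finset

def IsSimpleGame {n : ℕ} (v : Finset (Fin n) → ℕ) : Prop :=
  (∀ S, v S = 0 ∨ v S = 1) ∧ (∀ S T : Finset (Fin n), S ⊆ T → v S ≤ v T) ∧
    (∃ S, v S = 0) ∧ (∃ S, v S = 1)

def IsWeighted {n : ℕ} (v : Finset (Fin n) → ℕ) : Prop :=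
  ∃ (w : Fin n → ℝ) (q : ℝ), (∀ i, 0 ≤ w i) ∧ 0 < q ∧
    ∀ S : Finset (Fin n), v S = 1 ↔ q ≤ ∑ i ∈ S, w i

noncomputable def wg {n : ℕ} (q : ℝ) (w : Fin n → ℝ) (S : Finset (Fin n)) : ℕ :=
  if q ≤ ∑ i ∈ S, w i then 1 else 0

def Dominates {n : ℕ} (v : Finset (Fin n) → ℕ) (i j : Fin n) : Prop :=
  ∀ S : Finset (Fin n), i ∉ S → j ∉ S → v (insert j S) ≤ v (insert i S)

noncomputable def SSI {n : ℕ} (v : Finset (Fin n) → ℕ) (i : Fin n) : ℝ :=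
  ∑ S ∈ (univ.erase i).powerset,
    ((S.card.factorial * (n - S.card - 1).factorial : ℕ) : ℝ) / (n.factorial : ℝ) *
      ((v (insert i S) : ℝ) - (v S : ℝ))

def eta {n : ℕ} (v : Finset (Fin n) → ℕ) (i : Fin n) : ℤ :=
  ∑ S ∈ (univ.erase i).powerset, ((v (insert i S) : ℤ) - (v S : ℤ))

noncomputable def PBI {n : ℕ} (v : Finset (Fin n) → ℕ) (i : Fin n) : ℝ :=
  ((eta v i : ℤ) : ℝ) / ∑ j, ((eta v j : ℤ) : ℝ)


lemma swap_image_notmem {n : ℕ} (i j : Fin n) (S : Finset (Fin n)) (hi : i ∉ S) (hj : j ∉ S) :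
    S.image (Equiv.swap i j) = S := by
  rw [Finset.image_congr (g := id), Finset.image_id]
  intro x hx
  exact Equiv.swap_apply_of_ne_of_ne (by rintro rfl; exact hi hx) (by rintro rfl; exact hj hx)

lemma swap_image_mem {n : ℕ} (i j : Fin n) (S : Finset (Fin n)) (hi : i ∉ S) (hj : j ∈ S) :
    S.image (Equiv.swap i j) = insert i (S.erase j) := by
  conv_lhs => rw [← Finset.insert_erase hj]
  rw [Finset.image_insert, Equiv.swap_apply_right,
    swap_image_notmem i j _ (fun h => hi (Finset.mem_of_mem_erase h)) (Finset.notMem_erase _ _)]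

lemma key_ineq {n : ℕ} (v : Finset (Fin n) → ℕ) (i j : Fin n) (hd : Dominates v i j)
    (S : Finset (Fin n)) (hS : i ∉ S) :
    (v (insert j (S.image (Equiv.swap i j))) : ℤ) - v (S.image (Equiv.swap i j)) ≤
      (v (insert i S) : ℤ) - v S := by
  by_cases hj : j ∈ S
  · rw [swap_image_mem i j S hS hj]
    have hiS' : i ∉ S.erase j := fun h => hS (Finset.mem_of_mem_erase h)
    have h1 : insert j (insert i (S.erase j)) = insert i S := by
      rw [Finset.insert_comm, Finset.insert_erase hj]
    rw [h1]
    have h2 : v (insert j (S.erase j)) ≤ v (insert i (S.erase j)) :=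
      hd _ hiS' (Finset.notMem_erase _ _)
    rw [Finset.insert_erase hj] at h2
    omega
  · rw [swap_image_notmem i j S hS hj]
    have := hd S hS hj
    omega

lemma sum_swap_reindex {n : ℕ} {M : Type*} [AddCommMonoid M] (i j : Fin n)
    (f : Finset (Fin n) → M) :
    ∑ S ∈ (univ.erase j).powerset, f S =
      ∑ S ∈ (univ.erase i).powerset, f (S.image (Equiv.swap i j)) := by
  have hmem : ∀ (a b : Fin n) (S : Finset (Fin n)), S ∈ (univ.erase a).powerset →
      S.image (Equiv.swap a b) ∈ (univ.erase b).powerset := by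
    intro a b S hS
    simp only [Finset.mem_powerset, Finset.subset_erase, Finset.subset_univ, true_and] at hS ⊢
    intro hb
    obtain ⟨x, hx, hxb⟩ := Finset.mem_image.mp hb
    have : x = a := by
      by_contra hxa
      by_cases hxb2 : x = b
      · subst hxb2; rw [Equiv.swap_apply_right] at hxb; exact hxa hxb.symm
      · rw [Equiv.swap_apply_of_ne_of_ne hxa hxb2] at hxb; exact hxb2 hxb
    exact hS (this ▸ hx)
  have hinv : ∀ (a b : Fin n) (S : Finset (Fin n)),
      (S.image (Equiv.swap a b)).image (Equiv.swap a b) = S := by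
    intro a b S
    rw [Finset.image_image]
    simp [Function.comp_def]
  refine Finset.sum_nbij' (fun S => S.image (Equiv.swap i j))
    (fun S => S.image (Equiv.swap i j)) ?_ ?_ ?_ ?_ ?_
  · intro S hS
    rw [Equiv.swap_comm]
    exact hmem j i S hS
  · intro S hS; exact hmem i j S hS
  · intro S hS; exact hinv i j S
  · intro S hS; exact hinv i j S
  · intro S hS; exact congrArg f (hinv i j S).symm

lemma card_swap_image {n : ℕ} (i j : Fin n) (S : Finset (Fin n)) :
    (S.image (Equiv.swap i j)).card = S.card :=
  Finset.card_image_of_injective _ (Equiv.injective _)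

lemma main_ineq {n : ℕ} (v : Finset (Fin n) → ℕ) (i j : Fin n) (hd : Dominates v i j) :
    SSI v j ≤ SSI v i ∧ eta v j ≤ eta v i := by
  constructor
  · unfold SSI
    rw [sum_swap_reindex i j]
    apply Finset.sum_le_sum
    intro S hS
    have hiS : i ∉ S := by
      simp only [Finset.mem_powerset, Finset.subset_erase] at hS
      exact hS.2
    rw [card_swap_image]
    apply mul_le_mul_of_nonneg_left
    · have := key_ineq v i j hd S hiS
      have : ((v (insert j (S.image (Equiv.swap i j))) : ℤ) : ℝ) -
          ((v (S.image (Equiv.swap i j)) : ℤ) : ℝ) ≤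
          ((v (insert i S) : ℤ) : ℝ) - ((v S : ℤ) : ℝ) := by
        push_cast
        exact_mod_cast this
      push_cast at this ⊢
      linarith
    · positivity
  · unfold eta
    rw [sum_swap_reindex i j]
    apply Finset.sum_le_sum
    intro S hS
    have hiS : i ∉ S := by
      simp only [Finset.mem_powerset, Finset.subset_erase] at hS
      exact hS.2
    exact key_ineq v i j hd S hiS


theorem stmt11 (n : ℕ) (v : Finset (Fin n) → ℕ) (hv : IsSimpleGame v) :
    (∀ i j : Fin n, Dominates v i j → SSI v j ≤ SSI v i ∧ eta v j ≤ eta v i) ∧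
    ((∀ i j : Fin n, i ≤ j → Dominates v i j) →
      ∀ i j : Fin n, i ≤ j → SSI v j ≤ SSI v i ∧ eta v j ≤ eta v i) := by
  constructor
  · intro i j hd
    exact main_ineq v i j hd
  · intro h i j hij
    exact main_ineq v i j (h i j hij)
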